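/- Let G = (V, W) be a bipartite graph whose transversal system is a transversal matroid M_T(G), and let m_0 be a matching of a base of M_T(G) onto W. Then M_T(G) = M_{PT}(G, m_0): a set I ⊆ V is matchable if and only if it is m_0-matchable. -/

import Mathlib

open Set

section Bipartite

variable {V W : Type*}

/-- `m` is a matching in the bipartite graph with edge set `E ⊆ V × W`. -/
def IsBipMatching (E m : Set (V × W)) : Prop :=
  m ⊆ E ∧ ∀ p ∈ m, ∀ q ∈ m, (p.1 = q.1 ∨ p.2 = q.2) → p = q

/-- `I ⊆ V` is matchable in the bipartite graph with edge set `E`. -/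
def Matchable (E : Set (V × W)) (I : Set V) : Prop :=
  ∃ m, IsBipMatching E m ∧ Prod.fst '' m = I

/-- One step along an edge of `F` in the bipartite graph, on vertex type `V ⊕ W`. -/
def bipStep (F : Set (V × W)) : (V ⊕ W) → (V ⊕ W) → Prop := fun a b =>
  match a, b with
  | Sum.inl v, Sum.inr w => (v, w) ∈ F
  | Sum.inr w, Sum.inl v => (v, w) ∈ F
  | _, _ => False

/-- Every connected component of the bipartite graph with edge set `F` is finite. -/
def FiniteComponents (F : Set (V × W)) : Prop :=
  ∀ x : V ⊕ W, {y | Relation.ReflTransGen (bipStep F) x y}.Finite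

/-- `m` is an `m0`-matching: a matching such that every component of `m0 ∪ m` is finite. -/
def IsM0Matching (E m0 m : Set (V × W)) : Prop :=
  IsBipMatching E m ∧ FiniteComponents (m0 ∪ m)

/-- `I` is `m0`-matchable. -/
def M0Matchable (E m0 : Set (V × W)) (I : Set V) : Prop :=
  ∃ m, IsM0Matching E m0 m ∧ Prod.fst '' m = I

/-- `I` is `m0`-matchable onto `W'`. -/
def M0MatchableOnto (E m0 : Set (V × W)) (I : Set V) (W' : Set W) : Prop :=
  ∃ m, IsM0Matching E m0 m ∧ Prod.fst '' m = I ∧ Prod.snd '' m = W'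

end Bipartite

section Star

variable {V : Type*}

/-- The edge set of the converted bimaze of the dimaze `(D, B0)`: the right class is
`{v ∣ v ∉ B0}` (representing `(V \ B0)⋆`) and the edges are the identity matching
together with `v u⋆` for every edge `(u, v)` of `D`. -/
def starEdges (D : V → V → Prop) (B0 : Set V) : Set (V × V) :=
  {p | (p.1 = p.2 ∧ p.2 ∉ B0) ∨ (D p.2 p.1 ∧ p.2 ∉ B0)}

/-- The identity matching of the converted bimaze. -/
def starM0 (B0 : Set V) : Set (V × V) := {p | p.1 = p.2 ∧ p.1 ∉ B0}

end Star

open scoped Classical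

section Aux

variable {V W : Type*}

lemma bipStep_symm {F : Set (V × W)} {x y : V ⊕ W} (h : bipStep F x y) : bipStep F y x := by
  cases x <;> cases y <;> simp_all [bipStep]

lemma bipStep_mono {F F' : Set (V × W)} (hFF : F ⊆ F') {x y : V ⊕ W} (h : bipStep F x y) :
    bipStep F' x y := by
  cases x <;> cases y <;> simp_all [bipStep] <;> exact hFF h

/-- Components are well-defined: reachable sets of connected points agree. -/
lemma reach_congr {F : Set (V × W)} {x y : V ⊕ W}
    (h : Relation.ReflTransGen (bipStep F) x y) :
    {z | Relation.ReflTransGen (bipStep F) x z} = {z | Relation.ReflTransGen (bipStep F) y z} := by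
  have hsymm : Symmetric (Relation.ReflTransGen (bipStep F)) :=
    by haveI : Std.Symm (bipStep F) := ⟨fun _ _ => bipStep_symm⟩; exact fun a b h => Relation.ReflTransGen.stdSymm.symm a b h
  ext z
  exact ⟨fun hz => (hsymm h).trans hz, fun hz => h.trans hz⟩

/-- The alternating path: at each step, go from an `m`-edge `e` to the `m0`-partner `g e.2`
of its right endpoint and then along that vertex's `m`-edge, if it has one. -/
noncomputable def altSeq (m : Set (V × W)) (g : W → V) (e0 : V × W) : ℕ → Option (V × W)
  | 0 => some e0
  | n + 1 => (altSeq m g e0 n).bind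
      (fun e => if h : ∃ w', (g e.2, w') ∈ m then some (g e.2, h.choose) else none)

lemma altSeq_succ (m : Set (V × W)) (g : W → V) (e0 : V × W) (n : ℕ) :
    altSeq m g e0 (n + 1) = (altSeq m g e0 n).bind
      (fun e => if h : ∃ w', (g e.2, w') ∈ m then some (g e.2, h.choose) else none) := rfl

lemma altSeq_mem {m : Set (V × W)} {g : W → V} {e0 : V × W} (he0 : e0 ∈ m) :
    ∀ n e, altSeq m g e0 n = some e → e ∈ m := by
  intro n
  induction n with
  | zero => intro e he; rw [altSeq] at he; injection he with h; exact h ▸ he0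
  | succ n ih =>
    intro e he
    rw [altSeq_succ] at he
    rcases Option.bind_eq_some_iff.1 he with ⟨e', he', hnxt⟩
    by_cases h : ∃ w', (g e'.2, w') ∈ m
    · rw [dif_pos h] at hnxt
      injection hnxt with h'
      exact h' ▸ h.choose_spec
    · rw [dif_neg h] at hnxt; exact absurd hnxt (by simp)

lemma altSeq_step {m : Set (V × W)} {g : W → V} {e0 : V × W}
    {n : ℕ} {e e' : V × W} (he : altSeq m g e0 n = some e)
    (he' : altSeq m g e0 (n + 1) = some e') : e'.1 = g e.2 := by
  rw [altSeq_succ, he, Option.bind_some] at he'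
  by_cases h : ∃ w', (g e.2, w') ∈ m
  · rw [dif_pos h] at he'; injection he' with h'; rw [← h']
  · rw [dif_neg h] at he'; exact absurd he' (by simp)

lemma altSeq_none_mono {m : Set (V × W)} {g : W → V} {e0 : V × W}
    {n k : ℕ} (hnk : n ≤ k) (h : altSeq m g e0 n = none) : altSeq m g e0 k = none := by
  induction k with
  | zero => rw [Nat.le_zero.1 hnk] at h; exact h
  | succ k ih =>
    rcases Nat.le_succ_iff.1 hnk with h' | h'
    · rw [altSeq_succ, ih h', Option.bind_none]
    · subst h'; exact h

end Aux

section Main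

variable {V W : Type*}

/-- Key step: if `v0 ∈ I \ B`, then the component of `v0` in `m0 ∪ m` is finite. -/
lemma comp_finite_of_not_mem_base (E : Set (V × W)) (M : Matroid V)
    (hInd : ∀ I, M.Indep I ↔ Matchable E I)
    (m0 : Set (V × W)) (B : Set V) (hm0 : IsBipMatching E m0) (hB : M.IsBase B)
    (hfst : Prod.fst '' m0 = B) (hsnd : Prod.snd '' m0 = Set.univ)
    {m : Set (V × W)} (hm : IsBipMatching E m)
    {v0 : V} {w0 : W} (hv0m : (v0, w0) ∈ m) (hv0B : v0 ∉ B) :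
    {y | Relation.ReflTransGen (bipStep (m0 ∪ m)) (Sum.inl v0) y}.Finite := by
  -- the m0-partner function
  have hgex : ∀ w : W, ∃ v, (v, w) ∈ m0 := by
    intro w
    have : w ∈ Prod.snd '' m0 := hsnd ▸ mem_univ w
    obtain ⟨p, hp, hpe⟩ := this
    exact ⟨p.1, by rw [show (p.1, w) = p from Prod.ext rfl hpe.symm]; exact hp⟩
  choose g hgm using hgex
  set seq := altSeq m g (v0, w0) with hseqdef
  -- every point reachable from v0 lies on the alternating path
  have hreach : ∀ y, Relation.ReflTransGen (bipStep (m0 ∪ m)) (Sum.inl v0) y →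
      ∃ k e, seq k = some e ∧
        (y = Sum.inl e.1 ∨ y = Sum.inr e.2 ∨ y = Sum.inl (g e.2)) := by
    intro y hy
    induction hy with
    | refl => exact ⟨0, (v0, w0), rfl, Or.inl rfl⟩
    | tail hab hbc ih =>
      rename_i b c
      obtain ⟨k, e, hke, hcase⟩ := ih
      have hem : e ∈ m := altSeq_mem hv0m k e hke
      rcases hcase with hb | hb | hb
      · -- b = inl e.1
        subst hb
        cases c with
        | inl v => exact absurd hbc (by simp [bipStep])
        | inr w =>
          have hedge : (e.1, w) ∈ m0 ∪ m := hbc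
          rcases hedge with hedge | hedge
          · -- m0-edge at e.1 : e.1 ∈ B, so k > 0 and w is the previous right vertex
            match k, hke with
            | 0, hke =>
              have : e = (v0, w0) := by
                have h0 : seq 0 = some (v0, w0) := rfl
                rw [h0] at hke; injection hke with h; exact h.symm
              exact absurd (hfst ▸ ⟨(e.1, w), hedge, rfl⟩ : e.1 ∈ B) (this ▸ hv0B)
            | j + 1, hke =>
              obtain ⟨ep, hep, _⟩ := Option.bind_eq_some_iff.1 (hseqdef ▸ hke)
              have hst : e.1 = g ep.2 := altSeq_step hep hke
              have hm0e : (e.1, ep.2) ∈ m0 := hst ▸ hgm ep.2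
              have : (e.1, w) = (e.1, ep.2) := hm0.2 _ hedge _ hm0e (Or.inl rfl)
              have hw : w = ep.2 := congrArg Prod.snd this
              exact ⟨j, ep, hep, Or.inr (Or.inl (congrArg Sum.inr hw))⟩
          · have : (e.1, w) = e := hm.2 _ hedge _ hem (Or.inl rfl)
            exact ⟨k, e, hke, Or.inr (Or.inl (congrArg Sum.inr (congrArg Prod.snd this)))⟩
      · -- b = inr e.2
        subst hb
        cases c with
        | inr w => exact absurd hbc (by simp [bipStep])
        | inl v =>
          have hedge : (v, e.2) ∈ m0 ∪ m := hbc
          rcases hedge with hedge | hedge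
          · have : (v, e.2) = (g e.2, e.2) := hm0.2 _ hedge _ (hgm e.2) (Or.inr rfl)
            exact ⟨k, e, hke, Or.inr (Or.inr (congrArg Sum.inl (congrArg Prod.fst this)))⟩
          · have : (v, e.2) = e := hm.2 _ hedge _ hem (Or.inr rfl)
            exact ⟨k, e, hke, Or.inl (congrArg Sum.inl (congrArg Prod.fst this))⟩
      · -- b = inl (g e.2)
        subst hb
        cases c with
        | inl v => exact absurd hbc (by simp [bipStep])
        | inr w =>
          have hedge : (g e.2, w) ∈ m0 ∪ m := hbc
          rcases hedge with hedge | hedge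
          · have : (g e.2, w) = (g e.2, e.2) := hm0.2 _ hedge _ (hgm e.2) (Or.inl rfl)
            exact ⟨k, e, hke, Or.inr (Or.inl (congrArg Sum.inr (congrArg Prod.snd this)))⟩
          · -- g e.2 has an m-edge, so the path extends
            have h : ∃ w', (g e.2, w') ∈ m := ⟨w, hedge⟩
            have hnext : seq (k + 1) = some (g e.2, h.choose) := by
              rw [hseqdef, altSeq_succ, ← hseqdef, hke, Option.bind_some, dif_pos h]
            have : (g e.2, w) = (g e.2, h.choose) := hm.2 _ hedge _ h.choose_spec (Or.inl rfl)
            exact ⟨k + 1, (g e.2, h.choose), hnext,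
              Or.inr (Or.inl (congrArg Sum.inr (congrArg Prod.snd this)))⟩
  by_cases hA : ∀ n, ∃ e, seq n = some e
  · -- infinite alternating ray: switch m0 along it to match insert v0 B, contradiction
    exfalso
    choose es hes using hA
    have hes0 : es 0 = (v0, w0) :=
      Option.some_injective _ ((hes 0).symm.trans (rfl : seq 0 = some (v0, w0)))
    have hesm : ∀ n, es n ∈ m := fun n => altSeq_mem hv0m n (es n) (hes n)
    have hesm0 : ∀ n, ((es (n + 1)).1, (es n).2) ∈ m0 := by
      intro n
      have := altSeq_step (hes n) (hes (n + 1))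
      exact this ▸ hgm (es n).2
    -- the switched matching
    set R : Set (V × W) := {p | ∃ n, p = ((es (n + 1)).1, (es n).2)} with hR
    set m0' : Set (V × W) := (m0 \ R) ∪ {p | ∃ n, p = es n} with hm0'
    have hkey : ∀ p ∈ m0 \ R, ∀ n, (p.1 = (es n).1 ∨ p.2 = (es n).2) → False := by
      rintro p ⟨hpm0, hpR⟩ n (h1 | h2)
      · match n with
        | 0 =>
          have : p.1 ∈ B := hfst ▸ ⟨p, hpm0, rfl⟩
          rw [h1, hes0] at this
          exact hv0B this
        | j + 1 =>
          have : p = ((es (j + 1)).1, (es j).2) :=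
            hm0.2 _ hpm0 _ (hesm0 j) (Or.inl h1)
          exact hpR ⟨j, this⟩
      · have : p = ((es (n + 1)).1, (es n).2) :=
          hm0.2 _ hpm0 _ (hesm0 n) (Or.inr h2)
        exact hpR ⟨n, this⟩
    have hm0'match : IsBipMatching E m0' := by
      constructor
      · rintro p (⟨hp, -⟩ | ⟨n, rfl⟩)
        · exact hm0.1 hp
        · exact hm.1 (hesm n)
      · rintro p (hp | ⟨n, rfl⟩) q (hq | ⟨j, rfl⟩) hco
        · exact hm0.2 _ hp.1 _ hq.1 hco
        · exact absurd hco (by intro h; exact hkey p hp j h)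
        · exact absurd hco (by intro h; exact hkey q hq n (h.imp Eq.symm Eq.symm))
        · exact hm.2 _ (hesm n) _ (hesm j) hco
    have himg : Prod.fst '' m0' = insert v0 B := by
      apply Set.Subset.antisymm
      · rintro _ ⟨p, (hp | ⟨n, rfl⟩), rfl⟩
        · exact Or.inr (hfst ▸ ⟨p, hp.1, rfl⟩)
        · match n with
          | 0 => exact Or.inl (by rw [hes0])
          | j + 1 => exact Or.inr (hfst ▸ ⟨((es (j+1)).1, (es j).2), hesm0 j, rfl⟩)
      · rintro v (rfl | hv)
        · exact ⟨es 0, Or.inr ⟨0, rfl⟩, by rw [hes0]⟩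
        · obtain ⟨p, hp, rfl⟩ := hfst ▸ hv
          by_cases hpR : p ∈ R
          · obtain ⟨n, rfl⟩ := hpR
            exact ⟨es (n + 1), Or.inr ⟨n + 1, rfl⟩, rfl⟩
          · exact ⟨p, Or.inl ⟨hp, hpR⟩, rfl⟩
    have hindep : M.Indep (insert v0 B) := (hInd _).2 ⟨m0', hm0'match, himg⟩
    have := hB.eq_of_subset_indep hindep (subset_insert _ _)
    exact hv0B (this ▸ mem_insert v0 B)
  · -- the path dies: the component is contained in finitely many path vertices
    push_neg at hA
    obtain ⟨N, hN⟩ := hA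
    have hNnone : seq N = none := by
      cases h : seq N with
      | none => rfl
      | some e => exact absurd h (by intro h'; exact (hN e) h')
    apply Set.Finite.subset (s := ⋃ k ∈ {i : ℕ | i < N},
      {z : V ⊕ W | ∃ e, seq k = some e ∧
        (z = Sum.inl e.1 ∨ z = Sum.inr e.2 ∨ z = Sum.inl (g e.2))})
    · apply Set.Finite.biUnion (Set.finite_lt_nat N)
      intro k _
      cases h : seq k with
      | none => apply Set.Finite.subset (Set.finite_empty); rintro z ⟨e, he, -⟩; simp_all
      | some e =>
        apply Set.Finite.subset
          (((Set.finite_singleton (Sum.inl (g e.2))).insert (Sum.inr e.2)).insert (Sum.inl e.1))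
        rintro z ⟨e', he', hz⟩
        injection he' with he'; subst he'
        rcases hz with rfl | rfl | rfl <;> simp
    · intro y hy
      obtain ⟨k, e, hke, hcase⟩ := hreach y hy
      have hkN : k < N := by
        by_contra hk
        have hnone : seq k = none := altSeq_none_mono (Nat.le_of_not_lt hk) hNnone
        rw [hnone] at hke
        exact absurd hke (by simp)
      exact Set.mem_biUnion hkN ⟨e, hke, hcase⟩

end Main

theorem transversal_eq_pathTransversal {V W : Type*} (E : Set (V × W)) (M : Matroid V)
    (hE : M.E = Set.univ) (hInd : ∀ I, M.Indep I ↔ Matchable E I)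
    (m0 : Set (V × W)) (B : Set V) (hm0 : IsBipMatching E m0) (hB : M.IsBase B)
    (hfst : Prod.fst '' m0 = B) (hsnd : Prod.snd '' m0 = Set.univ) :
    ∀ I, Matchable E I ↔ M0Matchable E m0 I := by
  intro I
  constructor
  · rintro ⟨m, hm, rfl⟩
    set F := m0 ∪ m with hF
    -- finiteness of components of F
    set fin : (V ⊕ W) → Prop :=
      fun x => {y | Relation.ReflTransGen (bipStep F) x y}.Finite with hfin
    -- the modified matching
    set m' : Set (V × W) :=
      {p ∈ m | fin (Sum.inl p.1)} ∪ {p ∈ m0 | p.1 ∈ Prod.fst '' m ∧ ¬ fin (Sum.inl p.1)}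
      with hm'
    have hm'sub : m' ⊆ F := by
      rintro p (⟨hp, -⟩ | ⟨hp, -⟩)
      · exact Or.inr hp
      · exact Or.inl hp
    -- vertices of I in infinite components are in B
    have hIinfB : ∀ p ∈ m, ¬ fin (Sum.inl p.1) → p.1 ∈ B := by
      intro p hp hinf
      by_contra hpB
      exact hinf (comp_finite_of_not_mem_base E M hInd m0 B hm0 hB hfst hsnd hm
        (show (p.1, p.2) ∈ m by rwa [Prod.mk.eta]) hpB)
    have hm'match : IsBipMatching E m' := by
      constructor
      · rintro p (⟨hp, -⟩ | ⟨hp, -⟩)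
        · exact hm.1 hp
        · exact hm0.1 hp
      · have hmixed : ∀ p ∈ m, fin (Sum.inl p.1) → ∀ q ∈ m0, ¬ fin (Sum.inl q.1) →
            (p.1 = q.1 ∨ p.2 = q.2) → False := by
          rintro p hp hfp q hq hfq (h | h)
          · exact hfq (h ▸ hfp)
          · apply hfq
            have hstep1 : Relation.ReflTransGen (bipStep F) (Sum.inl q.1) (Sum.inr q.2) :=
              Relation.ReflTransGen.single (show (q.1, q.2) ∈ F by rw [Prod.mk.eta]; exact Or.inl hq)
            have hstep2 : Relation.ReflTransGen (bipStep F) (Sum.inr p.2) (Sum.inl p.1) :=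
              Relation.ReflTransGen.single (show (p.1, p.2) ∈ F by rw [Prod.mk.eta]; exact Or.inr hp)
            have hconn : Relation.ReflTransGen (bipStep F) (Sum.inl q.1) (Sum.inl p.1) :=
              hstep1.trans (h ▸ hstep2)
            show ({y | Relation.ReflTransGen (bipStep F) (Sum.inl q.1) y}).Finite
            rw [reach_congr hconn]
            exact hfp
        rintro p (⟨hp, hfp⟩ | ⟨hp, -, hfp⟩) q (⟨hq, hfq⟩ | ⟨hq, -, hfq⟩) hco
        · exact hm.2 _ hp _ hq hco
        · exact (hmixed p hp hfp q hq hfq hco).elim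
        · exact (hmixed q hq hfq p hp hfp (hco.imp Eq.symm Eq.symm)).elim
        · exact hm0.2 _ hp _ hq hco
    have himg : Prod.fst '' m' = Prod.fst '' m := by
      apply Set.Subset.antisymm
      · rintro _ ⟨p, (⟨hp, -⟩ | ⟨-, hp, -⟩), rfl⟩
        · exact ⟨p, hp, rfl⟩
        · exact hp
      · rintro _ ⟨p, hp, rfl⟩
        by_cases hfp : fin (Sum.inl p.1)
        · exact ⟨p, Or.inl ⟨hp, hfp⟩, rfl⟩
        · have hpB : p.1 ∈ B := hIinfB p hp hfp
          obtain ⟨q, hq, hq1⟩ := hfst ▸ hpB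
          exact ⟨q, Or.inr ⟨hq, hq1 ▸ ⟨p, hp, rfl⟩, by rw [hq1]; exact hfp⟩, hq1⟩
    refine ⟨m', ⟨hm'match, ?_⟩, himg⟩
    -- finite components of m0 ∪ m'
    intro x
    have hF'F : m0 ∪ m' ⊆ F := union_subset (subset_union_left) hm'sub
    by_cases hfx : fin x
    · exact hfx.subset fun y hy =>
        Relation.ReflTransGen.mono (r := bipStep (m0 ∪ m')) (p := bipStep F) (fun a b hab => bipStep_mono hF'F hab) x y hy
    · -- all F'-edges near an infinite component are m0-edges
      have hkey : ∀ a b, bipStep (m0 ∪ m') a b →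
          Relation.ReflTransGen (bipStep F) x a → bipStep m0 a b := by
        intro a b hab hxa
        have hfa : ¬ fin a := by
          intro h
          apply hfx
          show ({y | Relation.ReflTransGen (bipStep F) x y}).Finite
          rw [reach_congr hxa]
          exact h
        cases a with
        | inl v =>
          cases b with
          | inl v' => exact absurd hab (by simp [bipStep])
          | inr w =>
            rcases (hab : (v, w) ∈ m0 ∪ m') with h | (⟨h, hf⟩ | ⟨h, -, -⟩)
            · exact h
            · exact absurd hf hfa
            · exact h
        | inr w =>
          cases b with
          | inr w' => exact absurd hab (by simp [bipStep])
          | inl v =>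
            rcases (hab : (v, w) ∈ m0 ∪ m') with h | (⟨h, hf⟩ | ⟨h, -, -⟩)
            · exact h
            · exfalso
              apply hfx
              have hconn : Relation.ReflTransGen (bipStep F) x (Sum.inl v) :=
                hxa.tail (show (v, w) ∈ F from Or.inr h)
              show ({y | Relation.ReflTransGen (bipStep F) x y}).Finite
              rw [reach_congr hconn]
              exact hf
            · exact h
      have hsub : {y | Relation.ReflTransGen (bipStep (m0 ∪ m')) x y} ⊆
          {x} ∪ {y | bipStep m0 x y} := by
        intro y hy
        have : y = x ∨ bipStep m0 x y := by
          induction hy with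
          | refl => exact Or.inl rfl
          | tail hab hbc ih =>
            rename_i b c
            rcases ih with rfl | hxb
            · exact Or.inr (hkey _ _ hbc Relation.ReflTransGen.refl)
            · have hxbF : Relation.ReflTransGen (bipStep F) x b :=
                Relation.ReflTransGen.single (bipStep_mono (subset_union_left) hxb)
              have hbc' : bipStep m0 b c := hkey _ _ hbc hxbF
              left
              cases x with
              | inl v =>
                cases b with
                | inl v' => exact absurd hxb (by simp [bipStep])
                | inr w =>
                  cases c with
                  | inr w' => exact absurd hbc' (by simp [bipStep])
                  | inl v' =>
                    have : (v', w) = (v, w) := hm0.2 _ hbc' _ hxb (Or.inr rfl)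
                    exact congrArg Sum.inl (congrArg Prod.fst this)
              | inr w =>
                cases b with
                | inr w' => exact absurd hxb (by simp [bipStep])
                | inl v =>
                  cases c with
                  | inl v' => exact absurd hbc' (by simp [bipStep])
                  | inr w' =>
                    have : (v, w') = (v, w) := hm0.2 _ hbc' _ hxb (Or.inl rfl)
                    exact congrArg Sum.inr (congrArg Prod.snd this)
        rcases this with rfl | h
        · exact Or.inl rfl
        · exact Or.inr h
      apply Set.Finite.subset _ hsub
      apply Set.Finite.union (Set.finite_singleton x)
      apply Set.Subsingleton.finite
      intro y1 hy1 y2 hy2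
      cases x with
      | inl v =>
        cases y1 with
        | inl v1 => exact absurd hy1 (by simp [bipStep])
        | inr w1 =>
          cases y2 with
          | inl v2 => exact absurd hy2 (by simp [bipStep])
          | inr w2 =>
            have : (v, w1) = (v, w2) := hm0.2 _ hy1 _ hy2 (Or.inl rfl)
            exact congrArg Sum.inr (congrArg Prod.snd this)
      | inr w =>
        cases y1 with
        | inr w1 => exact absurd hy1 (by simp [bipStep])
        | inl v1 =>
          cases y2 with
          | inr w2 => exact absurd hy2 (by simp [bipStep])
          | inl v2 =>
            have : (v1, w) = (v2, w) := hm0.2 _ hy1 _ hy2 (Or.inr rfl)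
            exact congrArg Sum.inl (congrArg Prod.fst this)
  · rintro ⟨m, ⟨hm, -⟩, himg⟩
    exact ⟨m, hm, himg⟩
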